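/- Let K be a field, n ≥ 1 and a ∈ K with a ≠ 0. Let M be the n×n tridiagonal matrix over K with M 0 0 = a, M i i = 0 for i ≠ 0, M i (i+1) = 1 and M (i+1) i = −1 for 0 ≤ i < n−1, and all other entries 0. Then M is invertible, and the (0,0) entry of M⁻¹ equals a⁻¹ if n is odd and 0 if n is even. -/

import Mathlib

set_option maxHeartbeats 1000000

namespace TridiagAux

variable {K : Type*} [Field K]

/-- the matrix entries, as a function of natural indices -/
def Mf (a : K) : ℕ → ℕ → K := fun i j =>
  if i = j then (if i = 0 then a else 0)
  else if j = i + 1 then 1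
  else if i = j + 1 then -1 else 0

/-- the explicit inverse entries -/
def Nf (a : K) (n : ℕ) : ℕ → ℕ → K := fun i j =>
  if n % 2 = 1 then
    (if i % 2 = 0 then (if j % 2 = 0 then a⁻¹ else if j < i then 1 else 0)
     else (if j % 2 = 0 ∧ i < j then -1 else 0))
  else
    (if i % 2 = 1 then (if j % 2 = 1 then a else if j < i then 1 else 0)
     else (if j % 2 = 1 ∧ i < j then -1 else 0))

lemma Mf_self_succ (a : K) (m : ℕ) : Mf a m (m+1) = 1 := by
  unfold Mf; rw [if_neg (by omega), if_pos rfl]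

lemma Mf_succ_self (a : K) (m : ℕ) : Mf a (m+1) m = -1 := by
  unfold Mf; rw [if_neg (by omega), if_neg (by omega), if_pos rfl]

lemma Mf_apply_ne (a : K) (i j : ℕ) (h1 : i ≠ j) (h2 : j ≠ i+1) (h3 : i ≠ j+1) :
    Mf a i j = 0 := by
  unfold Mf; rw [if_neg h1, if_neg h2, if_neg h3]

lemma sum_fin_ite {A : Type*} [AddCommMonoid A] (n c : ℕ) (g : ℕ → A) :
    (∑ j : Fin n, if (j : ℕ) = c then g j else 0) = if c < n then g c else 0 := by
  rw [Fin.sum_univ_eq_sum_range (fun j => if j = c then g j else 0) n,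
    Finset.sum_ite_eq' (Finset.range n) c g]
  simp

lemma key (a : K) (ha : a ≠ 0) (n : ℕ) (i k : Fin n) :
    ∑ j : Fin n, Mf a i j * Nf a n j k = if (i : ℕ) = (k : ℕ) then 1 else 0 := by
  obtain ⟨i, hi⟩ := i
  obtain ⟨k, hk⟩ := k
  simp only
  match i with
  | 0 =>
    have h1 : ∀ j : Fin n, Mf a 0 j * Nf a n j k =
        (if (j : ℕ) = 0 then a * Nf a n 0 k else 0)
        + (if (j : ℕ) = 1 then Nf a n 1 k else 0) := by
      rintro ⟨(_|_|j), hj⟩ <;> simp [Mf]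
    rw [Finset.sum_congr rfl (fun j _ => h1 j), Finset.sum_add_distrib,
      sum_fin_ite n 0 (fun _ => a * Nf a n 0 k), sum_fin_ite n 1 (fun _ => Nf a n 1 k),
      if_pos hi]
    unfold Nf
    rcases Nat.even_or_odd n with hne | hno
    · have hn2 : n % 2 = 0 := Nat.even_iff.mp hne
      rw [if_neg (by omega)]
      split_ifs <;> first | (exfalso; (first | assumption | omega)) | ring1 | (rw [mul_inv_cancel₀ ha]; try ring1)
    · have hn2 : n % 2 = 1 := Nat.odd_iff.mp hno
      rw [if_pos hn2]
      split_ifs <;> first | (exfalso; (first | assumption | omega)) | ring1 | (rw [mul_inv_cancel₀ ha]; try ring1)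
  | m + 1 =>
    have h1 : ∀ j : Fin n, Mf a (m+1) j * Nf a n j k =
        (if (j : ℕ) = m then -(Nf a n m k) else 0)
        + (if (j : ℕ) = m + 2 then Nf a n (m+2) k else 0) := by
      rintro ⟨j, hj⟩
      simp only [Fin.val_mk]
      show Mf a (m+1) j * Nf a n j k = _
      rcases eq_or_ne j m with h | h
      · subst h
        rw [Mf_succ_self, if_pos rfl, if_neg (by omega)]
        ring
      · rcases eq_or_ne j (m+1) with h3 | h3
        · subst h3
          rw [show Mf a (m+1) (m+1) = 0 from by
              unfold Mf; rw [if_pos rfl, if_neg (by omega)],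
            if_neg (by omega), if_neg (by omega)]
          ring
        rcases eq_or_ne j (m+2) with h2 | h2
        · subst h2
          rw [show Mf a (m+1) (m+2) = 1 from Mf_self_succ a (m+1),
            if_neg (by omega), if_pos rfl]
          ring
        · rw [Mf_apply_ne a _ _ (by omega) (by omega) (by omega), if_neg h, if_neg h2]
          ring
    rw [Finset.sum_congr rfl (fun j _ => h1 j), Finset.sum_add_distrib,
      sum_fin_ite n m (fun _ => -(Nf a n m k)),
      sum_fin_ite n (m+2) (fun _ => Nf a n (m+2) k),
      if_pos (by omega : m < n)]
    unfold Nf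
    rcases Nat.even_or_odd n with hne | hno
    · have hn2 : n % 2 = 0 := Nat.even_iff.mp hne
      rw [if_neg (by omega)]
      split_ifs <;> first | (exfalso; (first | assumption | omega)) | ring1
    · have hn2 : n % 2 = 1 := Nat.odd_iff.mp hno
      rw [if_pos hn2]
      split_ifs <;> first | (exfalso; (first | assumption | omega)) | ring1

end TridiagAux

/-- The tridiagonal matrix with `a ≠ 0` in the `(0,0)` entry, `0` elsewhere on
the diagonal, `1` on the superdiagonal and `−1` on the subdiagonal is
invertible, and the `(0,0)` entry of its inverse is `a⁻¹` when `n` is odd and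
`0` when `n` is even. -/
theorem inv_tridiagonal_skew_apply_zero_zero {K : Type*} [Field K] (n : ℕ)
    (hn : 0 < n) (a : K) (ha : a ≠ 0) :
    IsUnit (Matrix.of fun i j : Fin n =>
        if (i : ℕ) = (j : ℕ) then (if (i : ℕ) = 0 then a else 0)
        else if (j : ℕ) = (i : ℕ) + 1 then 1
        else if (i : ℕ) = (j : ℕ) + 1 then -1
        else 0) ∧
    (Matrix.of fun i j : Fin n =>
        if (i : ℕ) = (j : ℕ) then (if (i : ℕ) = 0 then a else 0)
        else if (j : ℕ) = (i : ℕ) + 1 then 1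
        else if (i : ℕ) = (j : ℕ) + 1 then -1
        else 0)⁻¹ ⟨0, hn⟩ ⟨0, hn⟩ = if Odd n then a⁻¹ else 0 := by
  set M : Matrix (Fin n) (Fin n) K := Matrix.of fun i j : Fin n =>
        if (i : ℕ) = (j : ℕ) then (if (i : ℕ) = 0 then a else 0)
        else if (j : ℕ) = (i : ℕ) + 1 then 1
        else if (i : ℕ) = (j : ℕ) + 1 then -1
        else 0 with hM
  have hMf : ∀ i j : Fin n, M i j = TridiagAux.Mf a (i : ℕ) (j : ℕ) := by
    intro i j; rfl
  set N : Matrix (Fin n) (Fin n) K :=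
    Matrix.of fun i j : Fin n => TridiagAux.Nf a n (i : ℕ) (j : ℕ) with hN
  have hmul : M * N = 1 := by
    ext i k
    rw [Matrix.mul_apply]
    simp only [hN, Matrix.of_apply]
    rw [Finset.sum_congr rfl (fun j _ => by rw [hMf]),
      TridiagAux.key a ha n i k, Matrix.one_apply]
    congr 1
    simp [Fin.ext_iff]
  have hinv : Invertible M := invertibleOfRightInverse (a := M) (b := N) hmul
  refine ⟨isUnit_of_invertible M, ?_⟩
  rw [Matrix.inv_eq_right_inv hmul]
  show TridiagAux.Nf a n 0 0 = _
  unfold TridiagAux.Nf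
  rcases Nat.even_or_odd n with hne | hno
  · have hn2 : n % 2 = 0 := Nat.even_iff.mp hne
    rw [if_neg (by omega)]
    simp [Nat.odd_iff, hn2]
  · have hn2 : n % 2 = 1 := Nat.odd_iff.mp hno
    rw [if_pos hn2, if_pos hno]
    simp
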